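/- A topological space X is perfectly normal if and only if for every continuous map χ : X → V there exists a continuous map λ : X → J with π_J ∘ λ = χ. -/

import Mathlib

open unitInterval

/-- The interval with topologically doubled endpoints: `[0,1]` together with extra points
`0' = Sum.inr false` and `1' = Sum.inr true`, where `0'` is topologically indistinguishable
from `0` and `1'` is topologically indistinguishable from `1`. -/
def J : Type := unitInterval ⊕ Bool

instance : TopologicalSpace J where
  IsOpen U := IsOpen (Sum.inl ⁻¹' U : Set unitInterval) ∧
    (Sum.inr false ∈ U ↔ Sum.inl (0 : unitInterval) ∈ U) ∧
    (Sum.inr true ∈ U ↔ Sum.inl (1 : unitInterval) ∈ U)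
  isOpen_univ := ⟨isOpen_univ, Iff.rfl, Iff.rfl⟩
  isOpen_inter U V hU hV := ⟨hU.1.inter hV.1,
    and_congr hU.2.1 hV.2.1, and_congr hU.2.2 hV.2.2⟩
  isOpen_sUnion S hS := by
    refine ⟨?_, ?_, ?_⟩
    · first
        | (erw [Set.preimage_sUnion]; exact isOpen_biUnion fun U hU => (hS U hU).1)
        | exact isOpen_iff_forall_mem_open.mpr fun x ⟨U, hU, hx⟩ =>
            ⟨Sum.inl ⁻¹' U, Set.preimage_mono (Set.subset_sUnion_of_mem hU), (hS U hU).1, hx⟩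
    · constructor
      · rintro ⟨U, hU, hmem⟩
        exact ⟨U, hU, (hS U hU).2.1.mp hmem⟩
      · rintro ⟨U, hU, hmem⟩
        exact ⟨U, hU, (hS U hU).2.1.mpr hmem⟩
    · constructor
      · rintro ⟨U, hU, hmem⟩
        exact ⟨U, hU, (hS U hU).2.2.mp hmem⟩
      · rintro ⟨U, hU, hmem⟩
        exact ⟨U, hU, (hS U hU).2.2.mpr hmem⟩

/-- The three-point space with an open point `c` and two closed points `L`, `R`. -/
inductive V : Type
  | L | c | R

instance : TopologicalSpace V where
  IsOpen U := (V.L ∈ U → V.c ∈ U) ∧ (V.R ∈ U → V.c ∈ U)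
  isOpen_univ := ⟨fun _ => trivial, fun _ => trivial⟩
  isOpen_inter U W hU hW := ⟨fun h => ⟨hU.1 h.1, hW.1 h.2⟩, fun h => ⟨hU.2 h.1, hW.2 h.2⟩⟩
  isOpen_sUnion S hS := by
    constructor
    · rintro ⟨U, hU, hmem⟩
      exact ⟨U, hU, (hS U hU).1 hmem⟩
    · rintro ⟨U, hU, hmem⟩
      exact ⟨U, hU, (hS U hU).2 hmem⟩

/-- The map `π_J : J → V` sending `0` and `0'` to `L`, `1` and `1'` to `R`, and the open
interval `(0,1)` to the open point `c`. -/
noncomputable def piJ : J → V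
  | Sum.inr false => V.L
  | Sum.inr true => V.R
  | Sum.inl x => if x = 0 then V.L else if x = 1 then V.R else V.c


section Aux
open Set

-- Lemma A: in a perfectly normal space, a closed set is the zero set of a continuous nonneg fn
theorem zeroSet_of_closed {X : Type} [TopologicalSpace X] [PerfectlyNormalSpace X]
    {s : Set X} (hs : IsClosed s) :
    ∃ f : X → ℝ, Continuous f ∧ (∀ x, 0 ≤ f x) ∧ f ⁻¹' {0} = s := by
  obtain ⟨U, hUopen, hUeq⟩ := (PerfectlyNormalSpace.closed_gdelta hs).eq_iInter_nat
  have hsub : ∀ n, s ⊆ U n := fun n => hUeq ▸ iInter_subset U n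
  have hd : ∀ n, Disjoint s (U n)ᶜ := fun n => disjoint_compl_right_iff_subset.mpr (hsub n)
  choose g hg0 hg1 hgIcc using fun n =>
    exists_continuous_zero_one_of_isClosed hs (hUopen n).isClosed_compl (hd n)
  set F : X → ℝ := fun x => ∑' n, (1/2 : ℝ)^(n+1) * g n x with hF
  have hsum : Summable (fun n => (1/2 : ℝ)^(n+1)) := by
    simp_rw [pow_succ]
    exact summable_geometric_two.mul_right _
  have hbound : ∀ n x, ‖(1/2 : ℝ)^(n+1) * g n x‖ ≤ (1/2 : ℝ)^(n+1) := by
    intro n x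
    rw [Real.norm_eq_abs, abs_mul, abs_of_nonneg (by positivity : (0:ℝ) ≤ (1/2:ℝ)^(n+1)),
      abs_of_nonneg (hgIcc n x).1]
    nlinarith [(hgIcc n x).2, (hgIcc n x).1, pow_pos (by norm_num : (0:ℝ) < 1/2) (n+1)]
  have hsumx : ∀ x, Summable (fun n => (1/2 : ℝ)^(n+1) * g n x) := fun x =>
    (hsum).of_norm_bounded (fun n => hbound n x)
  refine ⟨F, continuous_tsum (fun n => by continuity) hsum hbound, ?_, ?_⟩
  · intro x
    exact tsum_nonneg fun n => mul_nonneg (by positivity) (hgIcc n x).1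
  · ext x
    simp only [mem_preimage, mem_singleton_iff]
    constructor
    · intro hFx
      rw [hUeq, mem_iInter]
      intro n
      by_contra hn
      have h1 : g n x = 1 := hg1 n hn
      have hle : (1/2 : ℝ)^(n+1) * g n x ≤ F x := by
        apply Summable.le_tsum (hsumx x) n
        intro j _
        exact mul_nonneg (by positivity) (hgIcc j x).1
      rw [hFx, h1, mul_one] at hle
      exact absurd hle (not_le.mpr (by positivity))
    · intro hx
      have : ∀ n, (1/2 : ℝ)^(n+1) * g n x = 0 := fun n => by
        rw [hg0 n hx]; simp
      simp only [hF]
      rw [tsum_congr this, tsum_zero]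

theorem precise_sep {X : Type} [TopologicalSpace X] [PerfectlyNormalSpace X]
    {s t : Set X} (hs : IsClosed s) (ht : IsClosed t) (hd : Disjoint s t) :
    ∃ h : X → ℝ, Continuous h ∧ (∀ x, h x ∈ Icc (0:ℝ) 1) ∧ h ⁻¹' {0} = s ∧ h ⁻¹' {1} = t := by
  obtain ⟨f, hfc, hf0, hfs⟩ := zeroSet_of_closed hs
  obtain ⟨g, hgc, hg0, hgt⟩ := zeroSet_of_closed ht
  have hpos : ∀ x, 0 < f x + g x := by
    intro x
    rcases lt_or_eq_of_le (add_nonneg (hf0 x) (hg0 x)) with h | h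
    · exact h
    have hfx : f x = 0 := le_antisymm (by linarith [hg0 x]) (hf0 x)
    have hgx : g x = 0 := le_antisymm (by linarith [hf0 x]) (hg0 x)
    have hxs : x ∈ s := hfs ▸ (show x ∈ f ⁻¹' {0} from hfx)
    have hxt : x ∈ t := hgt ▸ (show x ∈ g ⁻¹' {0} from hgx)
    exact absurd rfl (hd.ne_of_mem hxs hxt)
  refine ⟨fun x => f x / (f x + g x), hfc.div (hfc.add hgc) (fun x => (hpos x).ne'), ?_, ?_, ?_⟩
  · intro x
    exact ⟨div_nonneg (hf0 x) (hpos x).le, div_le_one_of_le₀ (le_add_of_nonneg_right (hg0 x)) (hpos x).le⟩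
  · ext x
    simp only [mem_preimage, mem_singleton_iff, div_eq_zero_iff, (hpos x).ne', or_false]
    rw [← hfs]; rfl
  · ext x
    simp only [mem_preimage, mem_singleton_iff]
    rw [div_eq_one_iff_eq (hpos x).ne', left_eq_add, ← hgt]; rfl

end Aux

theorem closed_L : IsClosed ({V.L} : Set V) := by
  rw [← isOpen_compl_iff]
  exact ⟨fun h => absurd rfl h, fun _ => fun h => V.noConfusion h⟩

theorem closed_R : IsClosed ({V.R} : Set V) := by
  rw [← isOpen_compl_iff]
  exact ⟨fun _ => fun h => V.noConfusion h, fun h => absurd rfl h⟩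

theorem forward {X : Type} [TopologicalSpace X] [PerfectlyNormalSpace X]
    (χ : X → V) (hχ : Continuous χ) :
    ∃ lam : X → J, Continuous lam ∧ piJ ∘ lam = χ := by
  set s : Set X := χ ⁻¹' {V.L} with hsdef
  set t : Set X := χ ⁻¹' {V.R} with htdef
  have hs : IsClosed s := closed_L.preimage hχ
  have ht : IsClosed t := closed_R.preimage hχ
  have hd : Disjoint s t := by
    rw [Set.disjoint_left]
    intro x hxs hxt
    simp only [hsdef, htdef, Set.mem_preimage, Set.mem_singleton_iff] at hxs hxt
    rw [hxs] at hxt; exact V.noConfusion hxt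
  obtain ⟨h, hc, hIcc, hs0, ht1⟩ := precise_sep hs ht hd
  set f : X → unitInterval := fun x => ⟨h x, hIcc x⟩ with hfdef
  have hfc : Continuous f := Continuous.subtype_mk hc _
  have hf0 : ∀ x, f x = 0 ↔ x ∈ s := by
    intro x
    rw [Subtype.ext_iff]
    show h x = 0 ↔ x ∈ s
    rw [← hs0]; rfl
  have hf1 : ∀ x, f x = 1 ↔ x ∈ t := by
    intro x
    rw [Subtype.ext_iff]
    show h x = 1 ↔ x ∈ t
    rw [← ht1]; rfl
  classical
  set lam : X → J := fun x =>
    match χ x with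
    | V.L => Sum.inr false
    | V.R => Sum.inr true
    | V.c => Sum.inl (f x) with hlam
  have hlamval : ∀ x, lam x = match χ x with
    | V.L => Sum.inr false
    | V.R => Sum.inr true
    | V.c => Sum.inl (f x) := fun x => rfl
  refine ⟨lam, ?_, ?_⟩
  · rw [continuous_def]
    intro U hU
    obtain ⟨hW, h0, h1⟩ := hU
    have key : lam ⁻¹' U = f ⁻¹' (Sum.inl ⁻¹' U) := by
      ext x
      simp only [Set.mem_preimage]
      cases hx : χ x with
      | L =>
        have hlx : lam x = Sum.inr false := by rw [hlamval, hx]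
        have hfx : f x = 0 := (hf0 x).mpr (by simp [hsdef, Set.mem_preimage, hx])
        rw [hlx, hfx]; exact h0
      | R =>
        have hlx : lam x = Sum.inr true := by rw [hlamval, hx]
        have hfx : f x = 1 := (hf1 x).mpr (by simp [htdef, Set.mem_preimage, hx])
        rw [hlx, hfx]; exact h1
      | c =>
        have hlx : lam x = Sum.inl (f x) := by rw [hlamval, hx]
        rw [hlx]
        exact Iff.rfl
    rw [key]
    exact hW.preimage hfc
  · funext x
    simp only [Function.comp_apply]
    cases hx : χ x with
    | L =>
      have hlx : lam x = Sum.inr false := by rw [hlamval, hx]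
      rw [hlx]; rfl
    | R =>
      have hlx : lam x = Sum.inr true := by rw [hlamval, hx]
      rw [hlx]; rfl
    | c =>
      have hlx : lam x = Sum.inl (f x) := by rw [hlamval, hx]
      have hne0 : f x ≠ 0 := by
        rw [Ne, hf0]
        intro hxs
        simp only [hsdef, Set.mem_preimage, Set.mem_singleton_iff] at hxs
        rw [hx] at hxs; exact V.noConfusion hxs
      have hne1 : f x ≠ 1 := by
        rw [Ne, hf1]
        intro hxt
        simp only [htdef, Set.mem_preimage, Set.mem_singleton_iff] at hxt
        rw [hx] at hxt; exact V.noConfusion hxt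
      rw [hlx]
      simp [piJ, hne0, hne1]

/-- collapse map J → unitInterval -/
def gJ : J → unitInterval
  | Sum.inl y => y
  | Sum.inr false => 0
  | Sum.inr true => 1

theorem gJ_continuous : Continuous gJ := by
  rw [continuous_def]
  intro W hW
  exact ⟨hW, Iff.rfl, Iff.rfl⟩

theorem one_ne_zero_I : (1 : unitInterval) ≠ 0 := fun h => by
  have := Subtype.ext_iff.mp h
  norm_num at this

theorem gJ_eq_zero_iff (z : J) : gJ z = 0 ↔ piJ z = V.L := by
  rcases z with y | b
  · show (y = 0) ↔ _
    show _ ↔ (if y = 0 then V.L else if y = 1 then V.R else V.c) = V.L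
    by_cases hy0 : y = 0
    · simp [hy0]
    · rw [if_neg hy0]
      by_cases hy1 : y = 1
      · rw [if_pos hy1]
        exact iff_of_false hy0 (fun h => V.noConfusion h)
      · rw [if_neg hy1]
        exact iff_of_false hy0 (fun h => V.noConfusion h)
  · cases b
    · exact iff_of_true rfl rfl
    · exact iff_of_false one_ne_zero_I (fun h => V.noConfusion h)

theorem gJ_eq_one_iff (z : J) : gJ z = 1 ↔ piJ z = V.R := by
  rcases z with y | b
  · show (y = 1) ↔ _
    show _ ↔ (if y = 0 then V.L else if y = 1 then V.R else V.c) = V.R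
    by_cases hy0 : y = 0
    · rw [if_pos hy0]
      refine iff_of_false ?_ (fun h => V.noConfusion h)
      rw [hy0]
      exact fun h => one_ne_zero_I h.symm
    · rw [if_neg hy0]
      by_cases hy1 : y = 1
      · simp [hy1]
      · rw [if_neg hy1]
        exact iff_of_false hy1 (fun h => V.noConfusion h)
  · cases b
    · exact iff_of_false (fun h => one_ne_zero_I h.symm) (fun h => V.noConfusion h)
    · exact iff_of_true rfl rfl

/-- From the lifting property, get a precise separating unitInterval-valued function. -/
theorem backward_sep {X : Type} [TopologicalSpace X]
    (hlift : ∀ χ : X → V, Continuous χ →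
      ∃ lam : X → J, Continuous lam ∧ piJ ∘ lam = χ)
    {s t : Set X} (hs : IsClosed s) (ht : IsClosed t) (hd : Disjoint s t) :
    ∃ f : X → unitInterval, Continuous f ∧ f ⁻¹' {0} = s ∧ f ⁻¹' {1} = t := by
  classical
  set χ : X → V := fun x => if x ∈ s then V.L else if x ∈ t then V.R else V.c with hχdef
  have hχval : ∀ x, χ x = if x ∈ s then V.L else if x ∈ t then V.R else V.c := fun _ => rfl
  have hχL : ∀ x, χ x = V.L ↔ x ∈ s := by
    intro x
    rw [hχval]
    by_cases hxs : x ∈ s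
    · simp [hxs]
    · by_cases hxt : x ∈ t
      · rw [if_neg hxs, if_pos hxt]
        exact iff_of_false (fun h => V.noConfusion h) hxs
      · rw [if_neg hxs, if_neg hxt]
        exact iff_of_false (fun h => V.noConfusion h) hxs
  have hχR : ∀ x, χ x = V.R ↔ x ∈ t := by
    intro x
    rw [hχval]
    by_cases hxs : x ∈ s
    · simp only [hxs, if_true]
      refine ⟨fun h => V.noConfusion h, fun h => absurd rfl (hd.ne_of_mem hxs h)⟩
    · by_cases hxt : x ∈ t
      · simp [hxs, hxt]
      · rw [if_neg hxs, if_neg hxt]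
        exact iff_of_false (fun h => V.noConfusion h) hxt
  have hχc : Continuous χ := by
    rw [continuous_def]
    intro U hU
    obtain ⟨hUL, hUR⟩ := hU
    by_cases hc : V.c ∈ U
    · by_cases hL : V.L ∈ U <;> by_cases hR : V.R ∈ U
      · have : χ ⁻¹' U = Set.univ := by
          ext x
          simp only [Set.mem_preimage, Set.mem_univ, iff_true]
          rcases hv : χ x with _ | _ | _
          · exact hL
          · exact hc
          · exact hR
        rw [this]; exact isOpen_univ
      · have : χ ⁻¹' U = tᶜ := by
          ext x
          simp only [Set.mem_preimage, Set.mem_compl_iff]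
          constructor
          · intro hxU hxt
            rw [(hχR x).mpr hxt] at hxU
            exact hR hxU
          · intro hxt
            rcases hv : χ x with _ | _ | _
            · exact hL
            · exact hc
            · exact absurd ((hχR x).mp hv) hxt
        rw [this]; exact ht.isOpen_compl
      · have : χ ⁻¹' U = sᶜ := by
          ext x
          simp only [Set.mem_preimage, Set.mem_compl_iff]
          constructor
          · intro hxU hxs
            rw [(hχL x).mpr hxs] at hxU
            exact hL hxU
          · intro hxs
            rcases hv : χ x with _ | _ | _
            · exact absurd ((hχL x).mp hv) hxs
            · exact hc
            · exact hR
        rw [this]; exact hs.isOpen_compl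
      · have : χ ⁻¹' U = (s ∪ t)ᶜ := by
          ext x
          simp only [Set.mem_preimage, Set.mem_compl_iff, Set.mem_union]
          constructor
          · intro hxU hmem
            rcases hmem with hxs | hxt
            · rw [(hχL x).mpr hxs] at hxU; exact hL hxU
            · rw [(hχR x).mpr hxt] at hxU; exact hR hxU
          · intro hmem
            push_neg at hmem
            rcases hv : χ x with _ | _ | _
            · exact absurd ((hχL x).mp hv) hmem.1
            · exact hc
            · exact absurd ((hχR x).mp hv) hmem.2
        rw [this]
        exact (hs.union ht).isOpen_compl
    · have hL : V.L ∉ U := fun h => hc (hUL h)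
      have hR : V.R ∉ U := fun h => hc (hUR h)
      have : χ ⁻¹' U = ∅ := by
        ext x
        simp only [Set.mem_preimage, Set.mem_empty_iff_false, iff_false]
        intro hxU
        rcases hv : χ x with _ | _ | _
        · rw [hv] at hxU; exact hL hxU
        · rw [hv] at hxU; exact hc hxU
        · rw [hv] at hxU; exact hR hxU
      rw [this]; exact isOpen_empty
  obtain ⟨lam, hlamc, hcomp⟩ := hlift χ hχc
  refine ⟨gJ ∘ lam, gJ_continuous.comp hlamc, ?_, ?_⟩
  · ext x
    simp only [Set.mem_preimage, Function.comp_apply, Set.mem_singleton_iff]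
    rw [gJ_eq_zero_iff, show piJ (lam x) = χ x from congrFun hcomp x, hχL]
  · ext x
    simp only [Set.mem_preimage, Function.comp_apply, Set.mem_singleton_iff]
    rw [gJ_eq_one_iff, show piJ (lam x) = χ x from congrFun hcomp x, hχR]

theorem perfectlyNormal_iff_lifts (X : Type) [TopologicalSpace X] :
    PerfectlyNormalSpace X ↔
      ∀ χ : X → V, Continuous χ →
        ∃ lam : X → J, Continuous lam ∧ piJ ∘ lam = χ := by
  constructor
  · intro _ χ hχ
    exact forward χ hχ
  · intro hlift
    have halfopen : IsOpen {y : unitInterval | (y : ℝ) < 1/2} :=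
      (isOpen_Iio (a := (1/2 : ℝ))).preimage continuous_subtype_val
    have halfopen' : IsOpen {y : unitInterval | (1/2 : ℝ) < (y : ℝ)} :=
      (isOpen_Ioi (a := (1/2 : ℝ))).preimage continuous_subtype_val
    refine { toNormalSpace := ⟨?_⟩, closed_gdelta := ?_ }
    · intro s t hs ht hd
      obtain ⟨f, hfc, hf0, hf1⟩ := backward_sep hlift hs ht hd
      refine ⟨f ⁻¹' {y | (y : ℝ) < 1/2}, f ⁻¹' {y | (1/2 : ℝ) < (y : ℝ)},
        halfopen.preimage hfc, halfopen'.preimage hfc, ?_, ?_, ?_⟩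
      · intro x hx
        have : f x = 0 := by
          have : x ∈ f ⁻¹' {0} := hf0 ▸ hx
          simpa using this
        simp only [Set.mem_preimage, Set.mem_setOf_eq, this]
        norm_num [show ((0 : unitInterval) : ℝ) = 0 from rfl]
      · intro x hx
        have : f x = 1 := by
          have : x ∈ f ⁻¹' {1} := hf1 ▸ hx
          simpa using this
        simp only [Set.mem_preimage, Set.mem_setOf_eq, this]
        norm_num [show ((1 : unitInterval) : ℝ) = 1 from rfl]
      · rw [Set.disjoint_left]
        intro x hx1 hx2
        simp only [Set.mem_preimage, Set.mem_setOf_eq] at hx1 hx2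
        linarith
    · intro s hs
      obtain ⟨f, hfc, hf0, _⟩ :=
        backward_sep hlift hs isClosed_empty (Set.disjoint_empty s)
      refine isGδ_iff_eq_iInter_nat.mpr
        ⟨fun n => f ⁻¹' {y | (y : ℝ) < 1/(n+1)}, fun n => ?_, ?_⟩
      · exact ((isOpen_Iio (a := (1/(n+1) : ℝ))).preimage continuous_subtype_val).preimage hfc
      · ext x
        simp only [Set.mem_iInter, Set.mem_preimage, Set.mem_setOf_eq]
        constructor
        · intro hx n
          have hfx : f x = 0 := by
            have : x ∈ f ⁻¹' {0} := hf0 ▸ hx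
            simpa using this
          rw [hfx, show ((0 : unitInterval) : ℝ) = 0 from rfl]
          positivity
        · intro hx
          have hle : (f x : ℝ) ≤ 0 := by
            by_contra hpos
            push_neg at hpos
            obtain ⟨n, hn⟩ := exists_nat_one_div_lt hpos
            exact absurd (hx n) (not_lt.mpr hn.le)
          have hfx : f x = 0 := by
            apply Subtype.ext
            exact le_antisymm hle (f x).2.1
          have : x ∈ f ⁻¹' {0} := by simpa using hfx
          rwa [hf0] at this
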